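/- Let C be a hereditary class of graphs that is closed under edge addition. Then: (1) C is closed under induced minors; (2) G_C is closed under induced minors; and (3) G_C is precisely the class of all graphs that are H'-induced-minor-free for every graph H' of the form 2K1 ∨ H with H ∈ M_C. -/

import Mathlib

open SimpleGraph

namespace PaperSep

variable {V : Type} {W : Type}

/-- There is a walk from `a` to `b` in `G` all of whose vertices avoid the set `S`. -/
def ConnAvoid (G : SimpleGraph V) (S : Set V) (a b : V) : Prop :=
  ∃ p : G.Walk a b, ∀ v ∈ p.support, v ∉ S

/-- `S` is an `(a,b)`-separator of `G`. -/
def IsSep (G : SimpleGraph V) (a b : V) (S : Set V) : Prop :=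
  a ∉ S ∧ b ∉ S ∧ ¬ ConnAvoid G S a b

/-- `S` is a minimal `(a,b)`-separator of `G`. -/
def IsMinSep (G : SimpleGraph V) (a b : V) (S : Set V) : Prop :=
  IsSep G a b S ∧ ∀ T ⊂ S, ¬ IsSep G a b T

/-- `S` is a minimal separator of `G`. -/
def IsMinimalSeparator (G : SimpleGraph V) (S : Set V) : Prop :=
  ∃ a b : V, a ≠ b ∧ ¬ G.Adj a b ∧ IsMinSep G a b S

/-- `K` is a cutset of `G`, i.e. `G − K` is disconnected. -/
def IsCutset (G : SimpleGraph V) (K : Set V) : Prop :=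
  ∃ a b : V, a ∉ K ∧ b ∉ K ∧ ¬ ConnAvoid G K a b

/-- `K` is a minimal cutset of `G`. -/
def IsMinimalCutset (G : SimpleGraph V) (K : Set V) : Prop :=
  IsCutset G K ∧ ∀ T ⊂ K, ¬ IsCutset G T

/-- A class of finite graphs. -/
def GraphClass : Type 1 :=
  ∀ (α : Type) [Finite α], SimpleGraph α → Prop

/-- A class is hereditary if it is closed under isomorphism and induced subgraphs. -/
def Hereditary (C : GraphClass) : Prop :=
  ∀ (α : Type) [Finite α] (G : SimpleGraph α) (β : Type) [Finite β] (H : SimpleGraph β)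
    (s : Set α), Nonempty (H ≃g G.induce s) → C α G → C β H

/-- `G ∈ 𝒢_C` : every minimal separator of `G` induces a graph in `C`. -/
def MemGC (C : GraphClass) {α : Type} [Finite α] (G : SimpleGraph α) : Prop :=
  ∀ S : Set α, IsMinimalSeparator G S → C ↥S (G.induce S)

/-- The class `𝒢_C`. -/
def GCclass (C : GraphClass) : GraphClass :=
  fun α inst G => @MemGC C α inst G

/-- `S` is a union of `k` (possibly empty) cliques of `G`. -/
def UnionOfCliques (G : SimpleGraph V) (k : ℕ) (S : Set V) : Prop :=
  ∃ f : Fin k → Set V, (∀ i, G.IsClique (f i)) ∧ S = ⋃ i, f i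

/-- `G ∈ 𝒢_k` : every minimal separator of `G` is a union of `k` cliques. -/
def MemGk (k : ℕ) (G : SimpleGraph V) : Prop :=
  ∀ S : Set V, IsMinimalSeparator G S → UnionOfCliques G k S

/-- The class `𝒢_k`. -/
def Gkclass (k : ℕ) : GraphClass := fun _ _ G => MemGk k G

/-- The class `𝒞_k` of graphs whose vertex set is a union of `k` cliques. -/
def Ckclass (k : ℕ) : GraphClass := fun _ _ G => UnionOfCliques G k Set.univ

/-- An induced minor model of `H` in `G`. -/
def IsIMModel (G : SimpleGraph V) (H : SimpleGraph W) (X : W → Set V) : Prop :=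
  (∀ w, (X w).Nonempty) ∧
  (∀ u w : W, u ≠ w → Disjoint (X u) (X w)) ∧
  (∀ w, (G.induce (X w)).Connected) ∧
  (∀ u w : W, u ≠ w → (H.Adj u w ↔ ∃ a ∈ X u, ∃ b ∈ X w, G.Adj a b))

/-- `H` is an induced minor of `G`. -/
def IsInducedMinor (H : SimpleGraph W) (G : SimpleGraph V) : Prop :=
  ∃ X : W → Set V, IsIMModel G H X

/-- The class `C` is closed under induced minors. -/
def IMClosed (C : GraphClass) : Prop :=
  ∀ (α : Type) [Finite α] (G : SimpleGraph α) (β : Type) [Finite β] (H : SimpleGraph β),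
    C α G → IsInducedMinor H G → C β H

/-- The class `C` is closed under the addition of edges. -/
def EdgeAddClosed (C : GraphClass) : Prop :=
  ∀ (α : Type) [Finite α] (G : SimpleGraph α) (a b : α), a ≠ b → ¬ G.Adj a b →
    C α G → C α (G ⊔ SimpleGraph.edge a b)

/-- `G ∈ ℳ_C` : `G ∉ C` but every proper induced minor of `G` is in `C`.
(For finite graphs, the proper induced minors of `G` are exactly the induced minors of `G`
not isomorphic to `G`.) -/
def MemMC (C : GraphClass) {α : Type} [Finite α] (G : SimpleGraph α) : Prop :=
  ¬ C α G ∧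
  ∀ (β : Type) [Finite β] (H : SimpleGraph β),
    IsInducedMinor H G → IsEmpty (H ≃g G) → C β H

/-- The complete join of two graphs. -/
def join (G : SimpleGraph V) (H : SimpleGraph W) : SimpleGraph (V ⊕ W) :=
  SimpleGraph.fromRel (fun x y =>
    match x, y with
    | Sum.inl a, Sum.inl b => G.Adj a b
    | Sum.inr a, Sum.inr b => H.Adj a b
    | _, _ => True)

/-- The class `C` is closed under the addition of universal vertices (up to isomorphism). -/
def UnivAddClosed (C : GraphClass) : Prop :=
  ∀ (α : Type) [Finite α] (G : SimpleGraph α) (β : Type) [Finite β] (H : SimpleGraph β),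
    C α G → Nonempty (H ≃g join (⊥ : SimpleGraph (Fin 1)) G) → C β H

/-- `G` has a universal vertex. -/
def HasUniversalVertex (G : SimpleGraph V) : Prop :=
  ∃ v : V, ∀ w : V, w ≠ v → G.Adj v w



/-- `G` is a theta: two nonadjacent vertices joined by three internally disjoint induced
paths of length at least two, with no other vertices or edges
(equivalently, a subdivision of `K_{2,3}`). -/
def IsTheta (G : SimpleGraph V) : Prop :=
  ∃ (a b : V) (P₁ P₂ P₃ : G.Walk a b),
    a ≠ b ∧
    P₁.IsPath ∧ P₂.IsPath ∧ P₃.IsPath ∧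
    2 ≤ P₁.length ∧ 2 ≤ P₂.length ∧ 2 ≤ P₃.length ∧
    (∀ v : V, v ∈ P₁.support → v ∈ P₂.support → v = a ∨ v = b) ∧
    (∀ v : V, v ∈ P₁.support → v ∈ P₃.support → v = a ∨ v = b) ∧
    (∀ v : V, v ∈ P₂.support → v ∈ P₃.support → v = a ∨ v = b) ∧
    (∀ v : V, v ∈ P₁.support ∨ v ∈ P₂.support ∨ v ∈ P₃.support) ∧
    (∀ u v : V, G.Adj u v ↔
      s(u, v) ∈ P₁.edges ∨ s(u, v) ∈ P₂.edges ∨ s(u, v) ∈ P₃.edges)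

/-- `G` is a pyramid: an apex `a` joined to a triangle `b₁b₂b₃` by three paths sharing only
`a`, at least two of which have length at least two, with no other vertices or edges. -/
def IsPyramid (G : SimpleGraph V) : Prop :=
  ∃ (a b₁ b₂ b₃ : V) (P₁ : G.Walk a b₁) (P₂ : G.Walk a b₂) (P₃ : G.Walk a b₃),
    G.Adj b₁ b₂ ∧ G.Adj b₁ b₃ ∧ G.Adj b₂ b₃ ∧
    P₁.IsPath ∧ P₂.IsPath ∧ P₃.IsPath ∧
    1 ≤ P₁.length ∧ 1 ≤ P₂.length ∧ 1 ≤ P₃.length ∧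
    ((2 ≤ P₁.length ∧ 2 ≤ P₂.length) ∨ (2 ≤ P₁.length ∧ 2 ≤ P₃.length) ∨
      (2 ≤ P₂.length ∧ 2 ≤ P₃.length)) ∧
    (∀ v : V, v ∈ P₁.support → v ∈ P₂.support → v = a) ∧
    (∀ v : V, v ∈ P₁.support → v ∈ P₃.support → v = a) ∧
    (∀ v : V, v ∈ P₂.support → v ∈ P₃.support → v = a) ∧
    (∀ v : V, v ∈ P₁.support ∨ v ∈ P₂.support ∨ v ∈ P₃.support) ∧
    (∀ u v : V, G.Adj u v ↔
      s(u, v) ∈ P₁.edges ∨ s(u, v) ∈ P₂.edges ∨ s(u, v) ∈ P₃.edges ∨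
      s(u, v) = s(b₁, b₂) ∨ s(u, v) = s(b₁, b₃) ∨ s(u, v) = s(b₂, b₃))

/-- `G` is a prism: two disjoint triangles joined by three pairwise disjoint paths, with no
other vertices or edges. -/
def IsPrism (G : SimpleGraph V) : Prop :=
  ∃ (a₁ a₂ a₃ b₁ b₂ b₃ : V) (P₁ : G.Walk a₁ b₁) (P₂ : G.Walk a₂ b₂) (P₃ : G.Walk a₃ b₃),
    G.Adj a₁ a₂ ∧ G.Adj a₁ a₃ ∧ G.Adj a₂ a₃ ∧
    G.Adj b₁ b₂ ∧ G.Adj b₁ b₃ ∧ G.Adj b₂ b₃ ∧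
    P₁.IsPath ∧ P₂.IsPath ∧ P₃.IsPath ∧
    1 ≤ P₁.length ∧ 1 ≤ P₂.length ∧ 1 ≤ P₃.length ∧
    (∀ v : V, v ∈ P₁.support → v ∈ P₂.support → False) ∧
    (∀ v : V, v ∈ P₁.support → v ∈ P₃.support → False) ∧
    (∀ v : V, v ∈ P₂.support → v ∈ P₃.support → False) ∧
    (∀ v : V, v ∈ P₁.support ∨ v ∈ P₂.support ∨ v ∈ P₃.support) ∧
    (∀ u v : V, G.Adj u v ↔
      s(u, v) ∈ P₁.edges ∨ s(u, v) ∈ P₂.edges ∨ s(u, v) ∈ P₃.edges ∨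
      s(u, v) = s(a₁, a₂) ∨ s(u, v) = s(a₁, a₃) ∨ s(u, v) = s(a₂, a₃) ∨
      s(u, v) = s(b₁, b₂) ∨ s(u, v) = s(b₁, b₃) ∨ s(u, v) = s(b₂, b₃))

/-- `G` is a long prism: a prism other than the complement of `C₆`, i.e. a prism in which at
least one of the three paths has length at least two. -/
def IsLongPrism (G : SimpleGraph V) : Prop :=
  ∃ (a₁ a₂ a₃ b₁ b₂ b₃ : V) (P₁ : G.Walk a₁ b₁) (P₂ : G.Walk a₂ b₂) (P₃ : G.Walk a₃ b₃),
    G.Adj a₁ a₂ ∧ G.Adj a₁ a₃ ∧ G.Adj a₂ a₃ ∧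
    G.Adj b₁ b₂ ∧ G.Adj b₁ b₃ ∧ G.Adj b₂ b₃ ∧
    P₁.IsPath ∧ P₂.IsPath ∧ P₃.IsPath ∧
    1 ≤ P₁.length ∧ 1 ≤ P₂.length ∧ 1 ≤ P₃.length ∧
    (2 ≤ P₁.length ∨ 2 ≤ P₂.length ∨ 2 ≤ P₃.length) ∧
    (∀ v : V, v ∈ P₁.support → v ∈ P₂.support → False) ∧
    (∀ v : V, v ∈ P₁.support → v ∈ P₃.support → False) ∧
    (∀ v : V, v ∈ P₂.support → v ∈ P₃.support → False) ∧
    (∀ v : V, v ∈ P₁.support ∨ v ∈ P₂.support ∨ v ∈ P₃.support) ∧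
    (∀ u v : V, G.Adj u v ↔
      s(u, v) ∈ P₁.edges ∨ s(u, v) ∈ P₂.edges ∨ s(u, v) ∈ P₃.edges ∨
      s(u, v) = s(a₁, a₂) ∨ s(u, v) = s(a₁, a₃) ∨ s(u, v) = s(a₂, a₃) ∨
      s(u, v) = s(b₁, b₂) ∨ s(u, v) = s(b₁, b₃) ∨ s(u, v) = s(b₂, b₃))

/-- `G` is a wheel: a hole (chordless cycle of length at least four) together with one
additional vertex having at least three neighbors on the hole. -/
def IsWheel (G : SimpleGraph V) : Prop :=
  ∃ (v x : V) (c : G.Walk x x),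
    c.IsCycle ∧ 4 ≤ c.length ∧ v ∉ c.support ∧
    (∀ u : V, u = v ∨ u ∈ c.support) ∧
    (∀ u w : V, u ∈ c.support → w ∈ c.support → G.Adj u w → s(u, w) ∈ c.edges) ∧
    3 ≤ {u : V | u ∈ c.support ∧ G.Adj v u}.ncard

/-- `G` is a broken wheel: a wheel in which the neighbors of the additional vertex induce a
disconnected subgraph of the hole. -/
def IsBrokenWheel (G : SimpleGraph V) : Prop :=
  ∃ (v x : V) (c : G.Walk x x),
    c.IsCycle ∧ 4 ≤ c.length ∧ v ∉ c.support ∧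
    (∀ u : V, u = v ∨ u ∈ c.support) ∧
    (∀ u w : V, u ∈ c.support → w ∈ c.support → G.Adj u w → s(u, w) ∈ c.edges) ∧
    3 ≤ {u : V | u ∈ c.support ∧ G.Adj v u}.ncard ∧
    ¬ (G.induce {u : V | u ∈ c.support ∧ G.Adj v u}).Connected

/-- `G` is diamond-free: it has no induced subgraph isomorphic to `K₄` minus an edge. -/
def DiamondFree (G : SimpleGraph V) : Prop :=
  ¬ ∃ a b c d : V, c ≠ d ∧ G.Adj a b ∧ G.Adj a c ∧ G.Adj a d ∧ G.Adj b c ∧ G.Adj b d ∧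
    ¬ G.Adj c d

/-- The short `n`-prism: two `n`-vertex cliques joined by a perfect matching. -/
def completePrism (n : ℕ) : SimpleGraph (Fin n ⊕ Fin n) :=
  SimpleGraph.fromRel (fun x y =>
    match x, y with
    | Sum.inl _, Sum.inl _ => True
    | Sum.inr _, Sum.inr _ => True
    | Sum.inl i, Sum.inr j => i = j
    | Sum.inr i, Sum.inl j => i = j)

/-- `G` is a complete prism, i.e. a short `n`-prism for some `n ≥ 3`. -/
def IsCompletePrism (G : SimpleGraph V) : Prop :=
  ∃ n : ℕ, 3 ≤ n ∧ Nonempty (G ≃g completePrism n)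

/-- `G` is a cycle. -/
def IsCycleGraph (G : SimpleGraph V) : Prop :=
  ∃ n : ℕ, 3 ≤ n ∧ Nonempty (G ≃g cycleGraph n)

/-- `G` is a complete graph. -/
def IsCompleteGraph (G : SimpleGraph V) : Prop :=
  ∀ u v : V, u ≠ v → G.Adj u v

/-- `G` has a clique-cutset. -/
def HasCliqueCutset (G : SimpleGraph V) : Prop :=
  ∃ K : Set V, G.IsClique K ∧ IsCutset G K

section Aux
variable {C : GraphClass}

lemma iso_transfer (hC : Hereditary C) {α : Type} [Finite α] {G : SimpleGraph α}
    {β : Type} [Finite β] {H : SimpleGraph β} (e : H ≃g G) (hG : C α G) : C β H := by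
  refine hC α G β H Set.univ ⟨e.trans (induceUnivIso G).symm⟩ hG

lemma add_edges (hC : Hereditary C) (hE : EdgeAddClosed C) {α : Type} [Finite α]
    {G G' : SimpleGraph α} (hle : G ≤ G') (hG : C α G) : C α G' := by
  have hfin : (G'.edgeSet \ G.edgeSet).Finite := Set.toFinite _
  generalize hn : (G'.edgeSet \ G.edgeSet).ncard = n
  induction n using Nat.strong_induction_on generalizing G with
  | _ n ih =>
    rcases Set.eq_empty_or_nonempty (G'.edgeSet \ G.edgeSet) with hemp | ⟨e, he⟩
    · have : G' ≤ G := by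
        rw [← SimpleGraph.edgeSet_subset_edgeSet]
        intro e he'
        by_contra h
        exact (Set.eq_empty_iff_forall_notMem.mp hemp e) ⟨he', h⟩
      have : G = G' := le_antisymm hle this
      exact this ▸ hG
    · obtain ⟨a, b⟩ := e
      have hab : a ≠ b := by
        intro h; exact G'.not_isDiag_of_mem_edgeSet he.1 (by simp [h])
      have hnadj : ¬ G.Adj a b := by
        intro h; exact he.2 (by simpa using h)
      have hKey : C α (G ⊔ edge a b) := hE α G a b hab hnadj hG
      have hle2 : G ⊔ edge a b ≤ G' := by
        refine sup_le hle ?_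
        intro x y hxy
        rw [edge_adj] at hxy
        have hadj : G'.Adj a b := by simpa using he.1
        rcases hxy.1 with ⟨rfl, rfl⟩ | ⟨rfl, rfl⟩
        · exact hadj
        · exact hadj.symm
      have hdiff : G'.edgeSet \ (G ⊔ edge a b).edgeSet
          = (G'.edgeSet \ G.edgeSet) \ {s(a, b)} := by
        rw [edgeSet_sup]
        have : (edge a b).edgeSet = {s(a, b)} := by
          ext f
          induction f with
          | _ x y =>
            simp only [SimpleGraph.mem_edgeSet, Set.mem_singleton_iff, edge_adj]
            constructor
            · rintro ⟨⟨rfl, rfl⟩ | ⟨rfl, rfl⟩, -⟩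
              · rfl
              · exact Sym2.eq_swap
            · intro h
              rw [Sym2.eq, Sym2.rel_iff'] at h
              rcases h with ⟨rfl, rfl⟩ | h
              · exact ⟨Or.inl ⟨rfl, rfl⟩, hab⟩
              · cases h
                exact ⟨Or.inr ⟨rfl, rfl⟩, hab.symm⟩
        rw [this]
        ext f
        simp only [Set.mem_diff, Set.mem_union, Set.mem_singleton_iff]
        tauto
      have hlt : ((G ⊔ edge a b).edgeSet \ G.edgeSet ≠ ∅) → True := fun _ => trivial
      have hcard : (G'.edgeSet \ (G ⊔ edge a b).edgeSet).ncard < n := by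
        rw [hdiff, ← hn]
        have hssub : (G'.edgeSet \ G.edgeSet) \ {s(a, b)} ⊂ G'.edgeSet \ G.edgeSet := by
          constructor
          · exact Set.diff_subset
          · intro hsub
            exact (hsub he).2 rfl
        exact Set.ncard_lt_ncard hssub hfin
      exact ih _ hcard hle2 hKey (Set.toFinite _) rfl

lemma branch_eq {α β : Type} {G : SimpleGraph α} {H : SimpleGraph β} {X : β → Set α}
    (hX : IsIMModel G H X) {a : α} {u w : β} (hu : a ∈ X u) (hw : a ∈ X w) : u = w := by
  by_contra h
  exact (hX.2.1 u w h).ne_of_mem hu hw rfl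

lemma im_closed_aux (hC : Hereditary C) (hE : EdgeAddClosed C) : IMClosed C := by
  intro α _ G β _ H hG ⟨X, hX⟩
  classical
  obtain ⟨hne, hdisj, hconn, hadj⟩ := hX
  choose rep hrep using fun w => hne w
  set r : α → α → Prop := fun a b =>
    (∃ w, a ∈ X w ∧ b ∈ X w) ∨ (∃ u w, H.Adj u w ∧ a ∈ X u ∧ b ∈ X w) with hr
  set G' : SimpleGraph α := G ⊔ SimpleGraph.fromRel r with hG'
  have hCG' : C α G' := add_edges hC hE le_sup_left hG
  have hrepinj : Function.Injective rep := by
    intro u w h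
    exact branch_eq ⟨hne, hdisj, hconn, hadj⟩ (hrep u) (h ▸ hrep w)
  refine hC α G' β H (Set.range rep) ⟨?_⟩ hCG'
  refine ⟨Equiv.ofInjective rep hrepinj, ?_⟩
  intro u w
  simp only [Equiv.ofInjective_apply, comap_adj, Function.Embedding.coe_subtype]
  show G'.Adj (rep u) (rep w) ↔ H.Adj u w
  constructor
  · intro h
    have hne' : u ≠ w := fun e => G'.irrefl (e ▸ h)
    rcases h with h | h
    · exact (hadj u w hne').mpr ⟨rep u, hrep u, rep w, hrep w, h⟩
    · rw [fromRel_adj] at h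
      rcases h.2 with (⟨w₀, h1, h2⟩ | ⟨u₀, w₀, ha, h1, h2⟩) | (⟨w₀, h1, h2⟩ | ⟨u₀, w₀, ha, h1, h2⟩)
      · exact absurd (branch_eq ⟨hne, hdisj, hconn, hadj⟩ (hrep u) h1 ▸
          branch_eq ⟨hne, hdisj, hconn, hadj⟩ (hrep w) h2) (by
            intro hh
            exact hne' (hh.symm ▸ rfl))
      · have e1 : u = u₀ := branch_eq ⟨hne, hdisj, hconn, hadj⟩ (hrep u) h1
        have e2 : w = w₀ := branch_eq ⟨hne, hdisj, hconn, hadj⟩ (hrep w) h2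
        exact e1 ▸ e2 ▸ ha
      · exact absurd (branch_eq ⟨hne, hdisj, hconn, hadj⟩ (hrep w) h1 ▸
          branch_eq ⟨hne, hdisj, hconn, hadj⟩ (hrep u) h2) (by
            intro hh
            exact hne' (hh.symm ▸ rfl))
      · have e1 : w = u₀ := branch_eq ⟨hne, hdisj, hconn, hadj⟩ (hrep w) h1
        have e2 : u = w₀ := branch_eq ⟨hne, hdisj, hconn, hadj⟩ (hrep u) h2
        exact (e1 ▸ e2 ▸ ha : H.Adj w u).symm
  · intro h
    have hne' : u ≠ w := h.ne
    refine Or.inr ?_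
    rw [fromRel_adj]
    refine ⟨fun e => hne' (hrepinj e), Or.inl (Or.inr ⟨u, w, h, hrep u, hrep w⟩)⟩

end Aux
section AuxB
variable {G : SimpleGraph V}

/-- Walks with support in `s` give reachability in the induced subgraph. -/
lemma reachable_induce_of_walk {s : Set V} {x y : V} (p : G.Walk x y)
    (hs : ∀ v ∈ p.support, v ∈ s) (hx : x ∈ s) (hy : y ∈ s) :
    (G.induce s).Reachable ⟨x, hx⟩ ⟨y, hy⟩ := by
  induction p with
  | nil => rfl
  | @cons a c b h q ih =>
    have hc : c ∈ s := hs c (by simp)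
    refine Reachable.trans ?_ (ih (fun v hv => hs v (by simp [hv])) hc hy)
    exact SimpleGraph.Adj.reachable (by exact h)

/-- Reachability in a smaller induced subgraph transfers to a bigger one. -/
lemma reachable_induce_mono {s t : Set V} (hst : s ⊆ t) {x y : V} (hx : x ∈ s) (hy : y ∈ s)
    (h : (G.induce s).Reachable ⟨x, hx⟩ ⟨y, hy⟩) :
    (G.induce t).Reachable ⟨x, hst hx⟩ ⟨y, hst hy⟩ := by
  let f : G.induce s →g G.induce t :=
    ⟨fun v => ⟨v.1, hst v.2⟩, fun {a b} hab => hab⟩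
  exact Reachable.map f h

/-- If two branch-set points are in a connected set `X w ⊆ T`, they are reachable in
`G.induce T`. -/
lemma reach_in_branch {Xw T : Set V} (hconn : (G.induce Xw).Connected) (hsub : Xw ⊆ T)
    {x y : V} (hx : x ∈ Xw) (hy : y ∈ Xw) :
    (G.induce T).Reachable ⟨x, hsub hx⟩ ⟨y, hsub hy⟩ :=
  reachable_induce_mono hsub hx hy (hconn.preconnected ⟨x, hx⟩ ⟨y, hy⟩)

lemma connAvoid_symm {S : Set V} {a b : V} (h : ConnAvoid G S a b) : ConnAvoid G S b a := by
  obtain ⟨p, hp⟩ := h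
  exact ⟨p.reverse, fun v hv => hp v (by rwa [Walk.support_reverse, List.mem_reverse] at hv)⟩

lemma connAvoid_trans {S : Set V} {a b c : V} (h1 : ConnAvoid G S a b)
    (h2 : ConnAvoid G S b c) : ConnAvoid G S a c := by
  obtain ⟨p, hp⟩ := h1; obtain ⟨q, hq⟩ := h2
  exact ⟨p.append q, fun v hv => by
    rcases (Walk.mem_support_append_iff p q).mp hv with h | h
    · exact hp v h
    · exact hq v h⟩

/-- From any separator one can extract a minimal one. -/
lemma exists_minSep_subset [Finite V] {a b : V} {T : Set V} (hT : IsSep G a b T) :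
    ∃ S, S ⊆ T ∧ IsMinSep G a b S := by
  generalize hn : T.ncard = n
  induction n using Nat.strong_induction_on generalizing T with
  | _ n ih =>
    by_cases h : ∀ T' ⊂ T, ¬ IsSep G a b T'
    · exact ⟨T, subset_rfl, hT, h⟩
    · push_neg at h
      obtain ⟨T', hsub, hT'⟩ := h
      obtain ⟨S, hS1, hS2⟩ := ih T'.ncard (hn ▸ Set.ncard_lt_ncard hsub (Set.toFinite T))
        hT' rfl
      exact ⟨S, hS1.trans hsub.subset, hS2⟩

/-- Key minimality lemma: a walk avoiding `S \ {s}` and passing through `s` yields a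
neighbor of `s` reachable from the start avoiding `S`. -/
lemma neighbor_of_walk {S : Set V} {s : V} :
    ∀ {x y : V} (p : G.Walk x y), (∀ v ∈ p.support, v ∉ S \ {s}) → s ∈ p.support → x ≠ s →
    ∃ v, G.Adj v s ∧ ConnAvoid G S x v := by
  intro x y p
  induction p with
  | nil =>
    intro _ hs hx
    simp only [Walk.support_nil, List.mem_singleton] at hs
    exact absurd hs.symm hx
  | @cons a c b h q ih =>
    intro havoid hs hx
    have ha : a ∉ S := fun haS => havoid a (by simp) ⟨haS, hx⟩
    by_cases hc : c = s
    · exact ⟨a, hc ▸ h, Walk.nil, by simpa using ha⟩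
    · have hs' : s ∈ q.support := by
        rcases List.mem_cons.mp (Walk.support_cons h q ▸ hs : s ∈ a :: q.support) with h' | h'
        · exact absurd h'.symm hx
        · exact h'
      obtain ⟨v, hv1, ⟨w, hw⟩⟩ := ih (fun v hv => havoid v (by simp [hv])) hs' hc
      exact ⟨v, hv1, Walk.cons h w, fun u hu => by
        rcases List.mem_cons.mp (Walk.support_cons h w ▸ hu : u ∈ a :: w.support) with h' | h'
        · exact h' ▸ ha
        · exact hw u h'⟩

end AuxB

section AuxC

lemma im_refl {α : Type} (H : SimpleGraph α) : IsInducedMinor H H := by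
  refine ⟨fun w => {w}, fun w => ⟨w, rfl⟩, ?_, ?_, ?_⟩
  · intro u w huw
    simpa [Set.disjoint_singleton_left] using huw
  · intro w
    rw [connected_iff]
    refine ⟨?_, ⟨⟨w, rfl⟩⟩⟩
    intro ⟨x, hx⟩ ⟨y, hy⟩
    cases hx; cases hy; rfl
  · intro u w _
    constructor
    · intro h; exact ⟨u, rfl, w, rfl, h⟩
    · rintro ⟨a, rfl, b, rfl, h⟩; exact h

lemma im_iso_left {α β γ : Type} {H' : SimpleGraph α} {H : SimpleGraph β} {G : SimpleGraph γ}
    (e : H' ≃g H) (h : IsInducedMinor H G) : IsInducedMinor H' G := by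
  obtain ⟨X, hne, hdisj, hconn, hadj⟩ := h
  refine ⟨fun w => X (e w), fun w => hne _, ?_, fun w => hconn _, ?_⟩
  · intro u w huw
    exact hdisj _ _ (fun hh => huw (e.injective hh))
  · intro u w huw
    rw [← hadj (e u) (e w) (fun hh => huw (e.injective hh))]
    constructor
    · intro h; exact e.map_adj_iff.mpr h
    · intro h; exact e.map_adj_iff.mp h

lemma im_trans {α β γ : Type} {K : SimpleGraph α} {H : SimpleGraph β} {G : SimpleGraph γ}
    (hKH : IsInducedMinor K H) (hHG : IsInducedMinor H G) : IsInducedMinor K G := by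
  obtain ⟨Y, hYne, hYdisj, hYconn, hYadj⟩ := hKH
  obtain ⟨X, hXne, hXdisj, hXconn, hXadj⟩ := hHG
  classical
  set Z : α → Set γ := fun u => ⋃ w ∈ Y u, X w with hZ
  have hmem : ∀ {u w x}, w ∈ Y u → x ∈ X w → x ∈ Z u := by
    intro u w x hw hx
    exact Set.mem_biUnion hw hx
  have hmem' : ∀ {u x}, x ∈ Z u → ∃ w ∈ Y u, x ∈ X w := by
    intro u x hx
    simpa [hZ] using hx
  refine ⟨Z, ?_, ?_, ?_, ?_⟩
  · intro u
    obtain ⟨w, hw⟩ := hYne u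
    obtain ⟨x, hx⟩ := hXne w
    exact ⟨x, hmem hw hx⟩
  · intro u u' huu'
    rw [Set.disjoint_left]
    intro x hx hx'
    obtain ⟨w, hw, hxw⟩ := hmem' hx
    obtain ⟨w', hw', hxw'⟩ := hmem' hx'
    have : w = w' := by
      by_contra h
      exact (hXdisj w w' h).ne_of_mem hxw hxw' rfl
    exact (hYdisj u u' huu').ne_of_mem hw (this ▸ hw') rfl
  · -- connectivity
    intro u
    have key : ∀ (wa wb : ↥(Y u)) (q : (H.induce (Y u)).Walk wa wb)
        (x x' : γ) (hx : x ∈ X wa.1) (hx' : x' ∈ X wb.1) (hxZ : x ∈ Z u) (hx'Z : x' ∈ Z u),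
        (G.induce (Z u)).Reachable ⟨x, hxZ⟩ ⟨x', hx'Z⟩ := by
      intro wa wb q
      induction q with
      | @nil c =>
        intro x x' hx hx' hxZ hx'Z
        exact reach_in_branch (hXconn c.1) (fun y hy => hmem c.2 hy) hx hx'
      | @cons a c b h q ih =>
        intro x x' hx hx' hxZ hx'Z
        have hadj : H.Adj a.1 c.1 := h
        obtain ⟨p, hp, q₀, hq₀, hpq⟩ := (hXadj a.1 c.1 hadj.ne).mp hadj
        refine Reachable.trans
          (reach_in_branch (hXconn a.1) (fun y hy => hmem a.2 hy) hx hp) ?_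
        refine Reachable.trans ?_ (ih q₀ x' hq₀ hx' (hmem c.2 hq₀) hx'Z)
        exact SimpleGraph.Adj.reachable (by exact hpq)
    have hnonempty : Nonempty ↥(Z u) := by
      obtain ⟨w, hw⟩ := hYne u
      obtain ⟨x, hx⟩ := hXne w
      exact ⟨⟨x, hmem hw hx⟩⟩
    rw [connected_iff]
    refine ⟨?_, hnonempty⟩
    rintro ⟨x, hx⟩ ⟨x', hx'⟩
    obtain ⟨w, hw, hxw⟩ := hmem' hx
    obtain ⟨w', hw', hxw'⟩ := hmem' hx'
    obtain ⟨q⟩ := (hYconn u).preconnected ⟨w, hw⟩ ⟨w', hw'⟩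
    exact key ⟨w, hw⟩ ⟨w', hw'⟩ q x x' hxw hxw' hx hx'
  · intro u u' huu'
    rw [hYadj u u' huu']
    constructor
    · rintro ⟨w, hw, w', hw', hww'⟩
      obtain ⟨p, hp, q₀, hq₀, hpq⟩ := (hXadj w w' hww'.ne).mp hww'
      exact ⟨p, hmem hw hp, q₀, hmem hw' hq₀, hpq⟩
    · rintro ⟨p, hp, q₀, hq₀, hpq⟩
      obtain ⟨w, hw, hpw⟩ := hmem' hp
      obtain ⟨w', hw', hqw'⟩ := hmem' hq₀
      have hww' : w ≠ w' := by
        rintro rfl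
        have hYuu : Y u ∩ Y u' = ∅ := Set.disjoint_iff_inter_eq_empty.mp (hYdisj u u' huu')
        exact absurd (Set.mem_inter hw hw') (hYuu ▸ Set.notMem_empty w)
      exact ⟨w, hw, w', hw', (hXadj w w' hww').mpr ⟨p, hpw, q₀, hqw', hpq⟩⟩

end AuxC

section AuxD
variable {C : GraphClass}

lemma im_rep {α β : Type} {G : SimpleGraph α} {H : SimpleGraph β} {X : β → Set α}
    (hX : IsIMModel G H X) : ∃ rep : β → α, Function.Injective rep ∧ ∀ w, rep w ∈ X w := by
  classical
  choose rep hrep using fun w => hX.1 w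
  exact ⟨rep, fun u w h => branch_eq hX (hrep u) (h ▸ hrep w), hrep⟩

lemma im_card_le {α β : Type} [Finite α] {G : SimpleGraph α} {H : SimpleGraph β}
    (h : IsInducedMinor H G) : Nat.card β ≤ Nat.card α := by
  obtain ⟨X, hX⟩ := h
  obtain ⟨rep, hinj, -⟩ := im_rep hX
  exact Nat.card_le_card_of_injective rep hinj

lemma im_card_eq_iso {α β : Type} [Finite α] [Finite β] {G : SimpleGraph α}
    {H : SimpleGraph β} (h : IsInducedMinor H G) (hcard : Nat.card β = Nat.card α) :
    Nonempty (H ≃g G) := by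
  classical
  obtain ⟨X, hX⟩ := h
  obtain ⟨rep, hinj, hrep⟩ := im_rep hX
  have : Fintype α := Fintype.ofFinite α
  have : Fintype β := Fintype.ofFinite β
  have hbij : Function.Bijective rep := by
    rw [Fintype.bijective_iff_injective_and_card]
    refine ⟨hinj, ?_⟩
    rw [← Nat.card_eq_fintype_card, ← Nat.card_eq_fintype_card]
    exact hcard
  have hsingle : ∀ w x, x ∈ X w → x = rep w := by
    intro w x hx
    obtain ⟨w₁, rfl⟩ := hbij.2 x
    rw [branch_eq hX hx (hrep w₁)]
  refine ⟨⟨Equiv.ofBijective rep hbij, ?_⟩⟩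
  intro u w
  simp only [Equiv.ofBijective_apply]
  show G.Adj (rep u) (rep w) ↔ H.Adj u w
  by_cases huw : u = w
  · subst huw
    simp
  · rw [hX.2.2.2 u w huw]
    constructor
    · intro hadj
      exact ⟨rep u, hrep u, rep w, hrep w, hadj⟩
    · rintro ⟨a, ha, b, hb, hab⟩
      rwa [hsingle u a ha, hsingle w b hb] at hab

lemma exists_MC_im (hC : Hereditary C) (hE : EdgeAddClosed C) {α : Type} [Finite α]
    (G₀ : SimpleGraph α) :
    ∀ (n : ℕ) (H : SimpleGraph (Fin n)), ¬ C (Fin n) H → IsInducedMinor H G₀ →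
      ∃ (m : ℕ) (H' : SimpleGraph (Fin m)), MemMC C H' ∧ IsInducedMinor H' G₀ := by
  intro n
  induction n using Nat.strong_induction_on with
  | _ n ih =>
    intro H hnC hIM
    by_cases hM : MemMC C H
    · exact ⟨n, H, hM, hIM⟩
    · have hB : ¬ ∀ (β : Type) [Finite β] (H'' : SimpleGraph β),
          IsInducedMinor H'' H → IsEmpty (H'' ≃g H) → C β H'' := fun hB => hM ⟨hnC, hB⟩
      push_neg at hB
      obtain ⟨β, inst, H'', hIM'', hNE, hnC''⟩ := hB
      have : Finite β := inst
      have : Fintype β := Fintype.ofFinite β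
      have hle : Nat.card β ≤ n := by
        have := im_card_le hIM''
        simpa using this
      have hne : Nat.card β ≠ n := by
        intro hcardeq
        exact hNE.false (Classical.choice (im_card_eq_iso hIM'' (by simpa using hcardeq)))
      have hlt : Nat.card β < n := lt_of_le_of_ne hle hne
      set m := Nat.card β with hm
      have e : β ≃ Fin m := Fintype.equivFinOfCardEq (by rw [← Nat.card_eq_fintype_card])
      set H₃ : SimpleGraph (Fin m) := SimpleGraph.comap (⇑(e.symm.toEmbedding)) H'' with hH₃
      have isoC : H₃ ≃g H'' := SimpleGraph.Iso.comap e.symm H''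
      have hnC₃ : ¬ C (Fin m) H₃ := fun h => hnC'' (iso_transfer hC isoC.symm h)
      have hIM₃ : IsInducedMinor H₃ G₀ := im_trans (im_iso_left isoC hIM'') hIM
      exact ih m hlt H₃ hnC₃ hIM₃

end AuxD

section AuxE
variable {C : GraphClass}

lemma joinJ_adj_ll {H : SimpleGraph W} (i j : Fin 2) :
    ¬ (join (⊥ : SimpleGraph (Fin 2)) H).Adj (Sum.inl i) (Sum.inl j) := by
  simp [join, fromRel_adj]

lemma joinJ_adj_lr {H : SimpleGraph W} (i : Fin 2) (w : W) :
    (join (⊥ : SimpleGraph (Fin 2)) H).Adj (Sum.inl i) (Sum.inr w) := by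
  simp [join, fromRel_adj]

lemma joinJ_adj_rr {H : SimpleGraph W} (w w' : W) :
    (join (⊥ : SimpleGraph (Fin 2)) H).Adj (Sum.inr w) (Sum.inr w') ↔ H.Adj w w' := by
  constructor
  · intro h
    rw [join, fromRel_adj] at h
    rcases h.2 with h' | h'
    · exact h'
    · exact h'.symm
  · intro h
    rw [join, fromRel_adj]
    exact ⟨by simp [h.ne], Or.inl h⟩

/-- A connected set avoiding `S` gives `ConnAvoid` between any two of its points. -/
lemma connAvoid_of_branch {G : SimpleGraph V} {D S : Set V}
    (hconn : (G.induce D).Connected) (hDS : ∀ v ∈ D, v ∉ S) {x y : V}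
    (hx : x ∈ D) (hy : y ∈ D) : ConnAvoid G S x y := by
  obtain ⟨p'⟩ := hconn.preconnected ⟨x, hx⟩ ⟨y, hy⟩
  refine ⟨p'.map (Embedding.induce D).toHom, ?_⟩
  intro v hv
  replace hv : v ∈ (p'.map (Embedding.induce D).toHom).support := hv
  rw [Walk.support_map, List.mem_map] at hv
  obtain ⟨u, hu, rfl⟩ := hv
  exact hDS _ u.2

/-- Forward direction of part 3. -/
lemma dir_forward (hC : Hereditary C) (hE : EdgeAddClosed C) {α : Type} [Finite α]
    {G : SimpleGraph α} (hG : MemGC C G) {W : Type} [Finite W] (H : SimpleGraph W)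
    (hH : MemMC C H) : ¬ IsInducedMinor (join (⊥ : SimpleGraph (Fin 2)) H) G := by
  classical
  rintro ⟨X, hX⟩
  obtain ⟨hne, hdisj, hconn, hadj⟩ := hX
  set A := X (Sum.inl 0) with hA
  set B := X (Sum.inl 1) with hB
  obtain ⟨a, ha⟩ := hne (Sum.inl 0)
  obtain ⟨b, hb⟩ := hne (Sum.inl 1)
  have h01 : (Sum.inl 0 : Fin 2 ⊕ W) ≠ Sum.inl 1 := by simp [Fin.ext_iff]
  have hABdisj : Disjoint A B := hdisj _ _ h01
  have hABne : ∀ x ∈ A, ∀ y ∈ B, ¬ G.Adj x y := by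
    intro x hx y hy hxy
    exact joinJ_adj_ll 0 1 ((hadj _ _ h01).mpr ⟨x, hx, y, hy, hxy⟩)
  have hab_ne : a ≠ b := hABdisj.ne_of_mem ha hb
  have hab_nadj : ¬ G.Adj a b := hABne a ha b hb
  -- the complement of A ∪ B is a separator
  have hsepT : IsSep G a b (A ∪ B)ᶜ := by
    refine ⟨fun h => h (Or.inl ha), fun h => h (Or.inr hb), ?_⟩
    rintro ⟨p, hp⟩
    have hstay : ∀ {x y : α} (q : G.Walk x y), (∀ v ∈ q.support, v ∈ A ∪ B) →
        x ∈ A → y ∈ A := by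
      intro x y q
      induction q with
      | nil => exact fun _ h => h
      | @cons x c y h q ih =>
        intro hsup hx
        have hc : c ∈ A ∪ B := hsup c (by simp)
        rcases hc with hc | hc
        · exact ih (fun v hv => hsup v (by simp [hv])) hc
        · exact absurd h (hABne x hx c hc)
    have : b ∈ A := hstay p (fun v hv => Set.notMem_compl_iff.mp (hp v hv)) ha
    exact hABdisj.ne_of_mem this hb rfl
  obtain ⟨S, hST, hSmin⟩ := exists_minSep_subset hsepT
  have hCS : C ↥S (G.induce S) := hG S ⟨a, b, hab_ne, hab_nadj, hSmin⟩
  have hSA : ∀ v ∈ S, v ∉ A ∪ B := fun v hv => by simpa using hST hv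
  -- S meets every branch set X (inr h)
  have hSX : ∀ h : W, ∃ x, x ∈ S ∧ x ∈ X (Sum.inr h) := by
    intro h
    by_contra hcon
    push_neg at hcon
    obtain ⟨a', ha', x, hx, hax⟩ := (hadj (Sum.inl 0) (Sum.inr h) (by simp)).mp (joinJ_adj_lr 0 h)
    obtain ⟨b', hb', y, hy, hby⟩ := (hadj (Sum.inl 1) (Sum.inr h) (by simp)).mp (joinJ_adj_lr 1 h)
    have hSnA : ∀ v ∈ A, v ∉ S := fun v hv hvS => (hSA v hvS) (Or.inl hv)
    have hSnB : ∀ v ∈ B, v ∉ S := fun v hv hvS => (hSA v hvS) (Or.inr hv)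
    have hSnX : ∀ v ∈ X (Sum.inr h), v ∉ S := fun v hv hvS => hcon v hvS hv
    have c1 : ConnAvoid G S a a' := connAvoid_of_branch (hconn _) hSnA ha ha'
    have c2 : ConnAvoid G S a' x :=
      ⟨Walk.cons hax Walk.nil, by
        intro v hv
        simp only [Walk.support_cons, Walk.support_nil, List.mem_cons,
          List.mem_singleton] at hv
        rcases hv with rfl | rfl | h'
        · exact hSnA _ ha'
        · exact hSnX _ hx
        · exact absurd h' List.not_mem_nil⟩
    have c3 : ConnAvoid G S x y := connAvoid_of_branch (hconn _) hSnX hx hy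
    have c4 : ConnAvoid G S y b' :=
      ⟨Walk.cons hby.symm Walk.nil, by
        intro v hv
        simp only [Walk.support_cons, Walk.support_nil, List.mem_cons,
          List.mem_singleton] at hv
        rcases hv with rfl | rfl | h'
        · exact hSnX _ hy
        · exact hSnB _ hb'
        · exact absurd h' List.not_mem_nil⟩
    have c5 : ConnAvoid G S b' b := connAvoid_of_branch (hconn _) hSnB hb' hb
    exact hSmin.1.2.2 (connAvoid_trans (connAvoid_trans (connAvoid_trans (connAvoid_trans c1 c2) c3) c4) c5)
  -- build a model of H in an edge-augmented version of G.induce S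
  set Y : W → Set ↥S := fun h => {x : ↥S | (x : α) ∈ X (Sum.inr h)} with hY
  set r : ↥S → ↥S → Prop := fun x y =>
    (∃ h, (x : α) ∈ X (Sum.inr h) ∧ (y : α) ∈ X (Sum.inr h)) ∨
    (∃ h h', H.Adj h h' ∧ (x : α) ∈ X (Sum.inr h) ∧ (y : α) ∈ X (Sum.inr h')) with hr
  set G₂ : SimpleGraph ↥S := G.induce S ⊔ SimpleGraph.fromRel r with hG₂
  have hCG₂ : C ↥S G₂ := add_edges hC hE le_sup_left hCS
  have hXfull : IsIMModel G (join (⊥ : SimpleGraph (Fin 2)) H) X := ⟨hne, hdisj, hconn, hadj⟩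
  have hmodel : IsIMModel G₂ H Y := by
    refine ⟨?_, ?_, ?_, ?_⟩
    · intro h
      obtain ⟨x, hxS, hxX⟩ := hSX h
      exact ⟨⟨x, hxS⟩, hxX⟩
    · intro h h' hhh
      rw [Set.disjoint_left]
      intro x hx hx'
      exact hhh (Sum.inr.inj (branch_eq hXfull hx hx'))
    · intro h
      rw [connected_iff]
      obtain ⟨x, hxS, hxX⟩ := hSX h
      refine ⟨?_, ⟨⟨⟨x, hxS⟩, hxX⟩⟩⟩
      rintro ⟨u, hu⟩ ⟨v, hv⟩
      by_cases huv : u = v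
      · subst huv
        rfl
      · refine SimpleGraph.Adj.reachable ?_
        show G₂.Adj u v
        refine Or.inr ?_
        rw [fromRel_adj]
        exact ⟨huv, Or.inl (Or.inl ⟨h, hu, hv⟩)⟩
    · intro h h' hhh
      constructor
      · intro hHadj
        obtain ⟨x, hxS, hxX⟩ := hSX h
        obtain ⟨y, hyS, hyX⟩ := hSX h'
        refine ⟨⟨x, hxS⟩, hxX, ⟨y, hyS⟩, hyX, ?_⟩
        refine Or.inr ?_
        rw [fromRel_adj]
        refine ⟨?_, Or.inl (Or.inr ⟨h, h', hHadj, hxX, hyX⟩)⟩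
        intro hxy
        have hyX' : x ∈ X (Sum.inr h') := by
          have : (⟨x, hxS⟩ : ↥S) = ⟨y, hyS⟩ := hxy
          rw [show x = y from congrArg Subtype.val this]
          exact hyX
        exact hhh (Sum.inr.inj (branch_eq hXfull hxX hyX'))
      · rintro ⟨x, hx, y, hy, hxy⟩
        rcases hxy with hxy | hxy
        · have : (join (⊥ : SimpleGraph (Fin 2)) H).Adj (Sum.inr h) (Sum.inr h') :=
            (hadj _ _ (fun e => hhh (Sum.inr.inj e))).mpr ⟨x, hx, y, hy, hxy⟩
          exact (joinJ_adj_rr h h').mp this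
        · rw [fromRel_adj] at hxy
          rcases hxy.2 with (⟨h₀, h1, h2⟩ | ⟨h₁, h₂, hadj', h1, h2⟩) | (⟨h₀, h1, h2⟩ | ⟨h₁, h₂, hadj', h1, h2⟩)
          · have e1 : Sum.inr h = Sum.inr h₀ := branch_eq hXfull hx h1
            have e2 : Sum.inr h' = Sum.inr h₀ := branch_eq hXfull hy h2
            exact absurd (Sum.inr.inj (e1.trans e2.symm) : h = h') hhh
          · have e1 : h₁ = h := Sum.inr.inj (branch_eq hXfull h1 hx)
            have e2 : h₂ = h' := Sum.inr.inj (branch_eq hXfull h2 hy)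
            exact e1 ▸ e2 ▸ hadj'
          · have e1 : Sum.inr h = Sum.inr h₀ := branch_eq hXfull hx h2
            have e2 : Sum.inr h' = Sum.inr h₀ := branch_eq hXfull hy h1
            exact absurd (Sum.inr.inj (e1.trans e2.symm) : h = h') hhh
          · have e1 : h₁ = h' := Sum.inr.inj (branch_eq hXfull h1 hy)
            have e2 : h₂ = h := Sum.inr.inj (branch_eq hXfull h2 hx)
            exact (e1 ▸ e2 ▸ hadj' : H.Adj h' h).symm
  exact hH.1 (im_closed_aux hC hE ↥S G₂ W H hCG₂ ⟨Y, hmodel⟩)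

end AuxE

section AuxF
variable {C : GraphClass}

lemma connAvoid_support {G : SimpleGraph V} {S : Set V} :
    ∀ {x y : V} (p : G.Walk x y), (∀ w ∈ p.support, w ∉ S) →
    ∀ u ∈ p.support, ConnAvoid G S x u := by
  intro x y p
  induction p with
  | nil =>
    intro hp u hu
    rw [Walk.support_nil, List.mem_singleton] at hu
    subst hu
    exact ⟨Walk.nil, by simpa using hp u (by simp)⟩
  | @cons a c b h q ih =>
    intro hp u hu
    rcases List.mem_cons.mp (Walk.support_cons h q ▸ hu : u ∈ a :: q.support) with rfl | hu'
    · exact ⟨Walk.nil, by simpa using hp u (by simp)⟩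
    · refine connAvoid_trans ⟨Walk.cons h Walk.nil, ?_⟩
        (ih (fun w hw => hp w (by simp [hw])) u hu')
      intro w hw
      simp only [Walk.support_cons, Walk.support_nil, List.mem_cons, List.mem_singleton] at hw
      rcases hw with rfl | rfl | hfalse
      · exact hp w (by simp)
      · exact hp w (by simp [Walk.support_cons])
      · exact absurd hfalse List.not_mem_nil

lemma isSep_symm {G : SimpleGraph V} {a b : V} {S : Set V} (h : IsSep G a b S) :
    IsSep G b a S :=
  ⟨h.2.1, h.1, fun c => h.2.2 (connAvoid_symm c)⟩

lemma isMinSep_symm {G : SimpleGraph V} {a b : V} {S : Set V} (h : IsMinSep G a b S) :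
    IsMinSep G b a S :=
  ⟨isSep_symm h.1, fun T hT hsep => h.2 T hT (isSep_symm hsep)⟩

lemma mem_reachSet_self {G : SimpleGraph V} {S : Set V} {a : V} (ha : a ∉ S) :
    a ∈ {v | ConnAvoid G S a v} :=
  ⟨Walk.nil, by
    intro w hw
    rw [Walk.support_nil, List.mem_singleton] at hw
    subst hw; exact ha⟩

lemma reachSet_not_mem {G : SimpleGraph V} {S : Set V} {a v : V}
    (hv : v ∈ {v | ConnAvoid G S a v}) : v ∉ S := by
  obtain ⟨p, hp⟩ := hv
  exact hp v (Walk.end_mem_support p)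

lemma reachSet_connected {G : SimpleGraph V} {S : Set V} {a : V} (ha : a ∉ S) :
    (G.induce {v | ConnAvoid G S a v}).Connected := by
  rw [connected_iff]
  refine ⟨?_, ⟨⟨a, mem_reachSet_self ha⟩⟩⟩
  have hreach : ∀ (v : V) (hv : v ∈ {v | ConnAvoid G S a v}),
      (G.induce {v | ConnAvoid G S a v}).Reachable ⟨a, mem_reachSet_self ha⟩ ⟨v, hv⟩ := by
    intro v hv
    obtain ⟨p, hp⟩ := hv
    exact reachable_induce_of_walk p (fun u hu => connAvoid_support p hp u hu) _ _
  rintro ⟨x, hx⟩ ⟨y, hy⟩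
  exact (hreach x hx).symm.trans (hreach y hy)

lemma full_neighbor {G : SimpleGraph V} {a b : V} {S : Set V} (hmin : IsMinSep G a b S)
    {s : V} (hs : s ∈ S) : ∃ v, G.Adj v s ∧ ConnAvoid G S a v := by
  have haS : a ∉ S := hmin.1.1
  have hbS : b ∉ S := hmin.1.2.1
  have hssub : S \ {s} ⊂ S := Set.sdiff_singleton_ssubset.mpr hs
  have hnotsep := hmin.2 (S \ {s}) hssub
  have hca : ConnAvoid G (S \ {s}) a b := by
    by_contra hcc
    exact hnotsep ⟨fun h => haS h.1, fun h => hbS h.1, hcc⟩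
  obtain ⟨p, hp⟩ := hca
  have hsmem : s ∈ p.support := by
    by_contra hsmem
    refine hmin.1.2.2 ⟨p, ?_⟩
    intro v hv hvS
    exact hp v hv ⟨hvS, fun h => hsmem (h ▸ hv)⟩
  exact neighbor_of_walk p hp hsmem (fun h => haS (h ▸ hs))

/-- Backward direction of part 3. -/
lemma dir_backward (hC : Hereditary C) (hE : EdgeAddClosed C) {α : Type} [Finite α]
    (G : SimpleGraph α)
    (hforb : ∀ (W : Type) [Finite W] (H : SimpleGraph W), MemMC C H →
      ¬ IsInducedMinor (join (⊥ : SimpleGraph (Fin 2)) H) G) : MemGC C G := by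
  classical
  intro S hSsep
  by_contra hnCS
  obtain ⟨a, b, hab, hnadj, hmin⟩ := hSsep
  have haS : a ∉ S := hmin.1.1
  have hbS : b ∉ S := hmin.1.2.1
  -- transfer `G.induce S` to a graph on `Fin n₀`
  have : Fintype ↥S := Fintype.ofFinite _
  set n₀ := Nat.card ↥S with hn₀
  have e : ↥S ≃ Fin n₀ := Fintype.equivFinOfCardEq (by rw [← Nat.card_eq_fintype_card])
  set H₀ : SimpleGraph (Fin n₀) := SimpleGraph.comap (⇑(e.symm.toEmbedding)) (G.induce S)
    with hH₀
  have iso₀ : H₀ ≃g G.induce S := SimpleGraph.Iso.comap e.symm _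
  have hnC₀ : ¬ C (Fin n₀) H₀ := fun h => hnCS (iso_transfer hC iso₀.symm h)
  have hIM₀ : IsInducedMinor H₀ (G.induce S) := im_iso_left iso₀ (im_refl _)
  obtain ⟨m, H', hMC, hIM'⟩ := exists_MC_im hC hE (G.induce S) n₀ H₀ hnC₀ hIM₀
  obtain ⟨Y, hYne, hYdisj, hYconn, hYadj⟩ := hIM'
  -- the two sides of the separator
  set A := {v : α | ConnAvoid G S a v} with hA
  set B := {v : α | ConnAvoid G S b v} with hB
  have haA : a ∈ A := mem_reachSet_self haS
  have hbB : b ∈ B := mem_reachSet_self hbS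
  have hAS : ∀ v ∈ A, v ∉ S := fun v hv => reachSet_not_mem hv
  have hBS : ∀ v ∈ B, v ∉ S := fun v hv => reachSet_not_mem hv
  have hdisjAB : Disjoint A B := by
    rw [Set.disjoint_left]
    intro v hvA hvB
    exact hmin.1.2.2 (connAvoid_trans hvA (connAvoid_symm hvB))
  have hanti : ∀ x ∈ A, ∀ y ∈ B, ¬ G.Adj x y := by
    intro x hx y hy hxy
    refine hmin.1.2.2 (connAvoid_trans hx (connAvoid_trans ⟨Walk.cons hxy Walk.nil, ?_⟩
      (connAvoid_symm hy)))
    intro w hw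
    simp only [Walk.support_cons, Walk.support_nil, List.mem_cons, List.mem_singleton] at hw
    rcases hw with rfl | rfl | hfalse
    · exact hAS _ hx
    · exact hBS _ hy
    · exact absurd hfalse List.not_mem_nil
  have hAconn : (G.induce A).Connected := reachSet_connected haS
  have hBconn : (G.induce B).Connected := reachSet_connected hbS
  have hfullA : ∀ s ∈ S, ∃ v ∈ A, G.Adj v s := by
    intro s hs
    obtain ⟨v, hv1, hv2⟩ := full_neighbor hmin hs
    exact ⟨v, hv2, hv1⟩
  have hfullB : ∀ s ∈ S, ∃ v ∈ B, G.Adj v s := by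
    intro s hs
    obtain ⟨v, hv1, hv2⟩ := full_neighbor (isMinSep_symm hmin) hs
    exact ⟨v, hv2, hv1⟩
  -- the model of `join ⊥ H'` in `G`
  set Z : Fin 2 ⊕ Fin m → Set α :=
    Sum.elim (fun i => if i = 0 then A else B) (fun h => Subtype.val '' Y h) with hZ
  have himg_sub : ∀ h : Fin m, (Subtype.val '' Y h : Set α) ⊆ S := by
    rintro h v ⟨u, hu, rfl⟩
    exact u.2
  have himgconn : ∀ h : Fin m, (G.induce (Subtype.val '' Y h)).Connected := by
    intro h
    let f : (G.induce S).induce (Y h) →g G.induce (Subtype.val '' Y h) :=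
      ⟨fun p => ⟨p.1.1, ⟨p.1, p.2, rfl⟩⟩, fun {p q} hpq => hpq⟩
    rw [connected_iff]
    constructor
    · rintro ⟨v, hv⟩ ⟨v', hv'⟩
      obtain ⟨u, hu, rfl⟩ := hv
      obtain ⟨u', hu', rfl⟩ := hv'
      exact Reachable.map f ((hYconn h).preconnected ⟨u, hu⟩ ⟨u', hu'⟩)
    · obtain ⟨u, hu⟩ := hYne h
      exact ⟨⟨u.1, ⟨u, hu, rfl⟩⟩⟩
  have hZl : ∀ i : Fin 2, Z (Sum.inl i) = if i = 0 then A else B := fun i => rfl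
  have hZr : ∀ h : Fin m, Z (Sum.inr h) = Subtype.val '' Y h := fun h => rfl
  have hfin2 : ∀ i j : Fin 2, i ≠ 0 → j ≠ 0 → i = j := by decide
  refine hforb (Fin m) H' hMC ⟨Z, ?_, ?_, ?_, ?_⟩
  · rintro (i | h)
    · rw [hZl]
      by_cases hi : i = 0
      · rw [if_pos hi]; exact ⟨a, haA⟩
      · rw [if_neg hi]; exact ⟨b, hbB⟩
    · obtain ⟨u, hu⟩ := hYne h
      exact ⟨u.1, ⟨u, hu, rfl⟩⟩
  · rintro (i | h) (j | h') hne
    · have hij : i ≠ j := fun hh => hne (hh ▸ rfl)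
      rw [hZl, hZl]
      by_cases hi : i = 0
      · have hj : ¬ j = 0 := fun hh => hij (hi.trans hh.symm)
        rw [if_pos hi, if_neg hj]; exact hdisjAB
      · have hj : j = 0 := by
          by_contra hj
          exact hij (hfin2 i j hi hj)
        rw [if_neg hi, if_pos hj]; exact hdisjAB.symm
    · rw [hZl, hZr, Set.disjoint_left]
      intro v hv hv'
      have hvS : v ∈ S := himg_sub h' hv'
      by_cases hi : i = 0
      · rw [if_pos hi] at hv; exact hAS v hv hvS
      · rw [if_neg hi] at hv; exact hBS v hv hvS
    · rw [hZl, hZr, Set.disjoint_left]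
      intro v hv hv'
      have hvS : v ∈ S := himg_sub h hv
      by_cases hj : j = 0
      · rw [if_pos hj] at hv'; exact hAS v hv' hvS
      · rw [if_neg hj] at hv'; exact hBS v hv' hvS
    · have hhh : h ≠ h' := fun hh => hne (hh ▸ rfl)
      rw [hZr, hZr, Set.disjoint_left]
      rintro v ⟨u, hu, rfl⟩ ⟨u', hu', heq⟩
      have : u' = u := Subtype.ext heq
      exact (hYdisj h h' hhh).ne_of_mem hu (this ▸ hu') rfl
  · rintro (i | h)
    · rw [hZl]
      by_cases hi : i = 0
      · rw [if_pos hi]; exact hAconn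
      · rw [if_neg hi]; exact hBconn
    · exact himgconn h
  · rintro (i | h) (j | h') hne
    · -- inl inl : apex pair, no adjacency
      have hij : i ≠ j := fun hh => hne (hh ▸ rfl)
      rw [hZl, hZl]
      constructor
      · intro hjj
        exact absurd hjj (joinJ_adj_ll i j)
      · rintro ⟨x, hx, y, hy, hxy⟩
        by_cases hi : i = 0
        · have hj : ¬ j = 0 := fun hh => hij (hi.trans hh.symm)
          rw [if_pos hi] at hx
          rw [if_neg hj] at hy
          exact (hanti x hx y hy hxy).elim
        · have hj : j = 0 := by
            by_contra hj
            exact hij (hfin2 i j hi hj)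
          rw [if_neg hi] at hx
          rw [if_pos hj] at hy
          exact (hanti y hy x hx hxy.symm).elim
    · -- inl inr : apex to branch, always adjacent
      rw [hZl, hZr]
      constructor
      · intro _
        obtain ⟨u, hu⟩ := hYne h'
        have huS : (u : α) ∈ S := u.2
        by_cases hi : i = 0
        · obtain ⟨v, hvA, hva⟩ := hfullA (u : α) huS
          rw [if_pos hi]
          exact ⟨v, hvA, u.1, ⟨u, hu, rfl⟩, hva⟩
        · obtain ⟨v, hvB, hvb⟩ := hfullB (u : α) huS
          rw [if_neg hi]
          exact ⟨v, hvB, u.1, ⟨u, hu, rfl⟩, hvb⟩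
      · intro _
        exact joinJ_adj_lr i h'
    · -- inr inl
      rw [hZr, hZl]
      constructor
      · intro _
        obtain ⟨u, hu⟩ := hYne h
        have huS : (u : α) ∈ S := u.2
        by_cases hj : j = 0
        · obtain ⟨v, hvA, hva⟩ := hfullA (u : α) huS
          rw [if_pos hj]
          exact ⟨u.1, ⟨u, hu, rfl⟩, v, hvA, hva.symm⟩
        · obtain ⟨v, hvB, hvb⟩ := hfullB (u : α) huS
          rw [if_neg hj]
          exact ⟨u.1, ⟨u, hu, rfl⟩, v, hvB, hvb.symm⟩
      · intro _
        exact (joinJ_adj_lr j h).symm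
    · -- inr inr
      have hhh : h ≠ h' := fun hh => hne (hh ▸ rfl)
      rw [hZr, hZr, joinJ_adj_rr, hYadj h h' hhh]
      constructor
      · rintro ⟨x, hx, y, hy, hxy⟩
        exact ⟨x.1, ⟨x, hx, rfl⟩, y.1, ⟨y, hy, rfl⟩, hxy⟩
      · rintro ⟨x, ⟨u, hu, rfl⟩, y, ⟨u', hu', rfl⟩, hxy⟩
        exact ⟨u, hu, u', hu', hxy⟩

end AuxF


/-- if `C` is hereditary and closed under edge addition, then `C` and
`𝒢_C` are closed under induced minors, and `𝒢_C` is precisely the class of graphs with no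
induced minor of the form `2K₁ ∨ H` with `H ∈ ℳ_C`. -/
theorem statement_4 (C : GraphClass) (hC : Hereditary C) (hE : EdgeAddClosed C) :
    IMClosed C ∧ IMClosed (GCclass C) ∧
    (∀ (V : Type) [Finite V] (G : SimpleGraph V),
      MemGC C G ↔
        ∀ (W : Type) [Finite W] (H : SimpleGraph W), MemMC C H →
          ¬ IsInducedMinor (join (⊥ : SimpleGraph (Fin 2)) H) G) := by
  have part3 : ∀ (V : Type) [Finite V] (G : SimpleGraph V),
      MemGC C G ↔
        ∀ (W : Type) [Finite W] (H : SimpleGraph W), MemMC C H →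
          ¬ IsInducedMinor (join (⊥ : SimpleGraph (Fin 2)) H) G := by
    intro V _ G
    constructor
    · intro hG W _ H hH
      exact dir_forward hC hE hG H hH
    · intro hforb
      exact dir_backward hC hE G hforb
  refine ⟨im_closed_aux hC hE, ?_, part3⟩
  intro α _ G β _ H hG hIM
  show MemGC C H
  refine (part3 β H).mpr ?_
  intro W _ H'' hH'' hbad
  exact (part3 α G).mp hG W H'' hH'' (im_trans hbad hIM)

end PaperSep
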